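/- Let L > 0, C₁ > 0, C₂ > 0 be real numbers and q₁ < q₂ positive real numbers, and let h > 0. Set ħ₁ = (L/C₁)^{1/q₁}, ħ₂ = (L/C₂)^{1/q₂}, h* = (C₁/C₂)^{1/(q₂-q₁)}, and βᵢ = min(L, Cᵢ·h^{qᵢ}) for i = 1, 2. Let X₁ and X₂ be independent real random variables on a probability space (Ω, ℙ), with Xᵢ uniformly distributed on [0, βᵢ]. If h* ≤ min(ħ₁, ħ₂) and 0 < h ≤ h*, then ℙ{X₁ ≤ X₂} = (1/2)·(h/h*)^{q₂-q₁}. -/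

import Mathlib

open MeasureTheory ProbabilityTheory

private lemma ofReal_max_zero (t : ℝ) : ENNReal.ofReal (max t 0) = ENNReal.ofReal t := by
  rcases le_total t 0 with h | h
  · rw [max_eq_right h, ENNReal.ofReal_of_nonpos h]; simp
  · rw [max_eq_left h]

lemma uniform_prob_le
    {Ω : Type*} [MeasurableSpace Ω] (P : Measure Ω) [IsProbabilityMeasure P]
    (b₁ b₂ : ℝ) (hb₂ : 0 < b₂) (hb : b₂ ≤ b₁)
    (X₁ X₂ : Ω → ℝ) (hX₁ : Measurable X₁) (hX₂ : Measurable X₂)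
    (hindep : IndepFun X₁ X₂ P)
    (hX₁unif : Measure.map X₁ P =
      volume.withDensity
        (fun x => ENNReal.ofReal ((Set.Icc (0:ℝ) b₁).indicator (fun _ => 1 / b₁) x)))
    (hX₂unif : Measure.map X₂ P =
      volume.withDensity
        (fun x => ENNReal.ofReal ((Set.Icc (0:ℝ) b₂).indicator (fun _ => 1 / b₂) x))) :
    P {ω | X₁ ω ≤ X₂ ω} = ENNReal.ofReal (b₂ / (2 * b₁)) := by
  have hb₁ : 0 < b₁ := hb₂.trans_le hb
  have hS : MeasurableSet {p : ℝ × ℝ | p.1 ≤ p.2} :=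
    measurableSet_le measurable_fst measurable_snd
  have hmap : P.map (fun ω => (X₁ ω, X₂ ω)) = (P.map X₁).prod (P.map X₂) :=
    (indepFun_iff_map_prod_eq_prod_map_map hX₁.aemeasurable hX₂.aemeasurable).mp hindep
  have h1 : P {ω | X₁ ω ≤ X₂ ω}
      = (P.map (fun ω => (X₁ ω, X₂ ω))) {p : ℝ × ℝ | p.1 ≤ p.2} := by
    rw [Measure.map_apply (hX₁.prodMk hX₂) hS]; rfl
  rw [h1, hmap, hX₁unif, hX₂unif, Measure.prod_apply hS]
  -- inner measure
  have hinner : ∀ x : ℝ,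
      (volume.withDensity
        (fun y => ENNReal.ofReal ((Set.Icc (0:ℝ) b₂).indicator (fun _ => 1 / b₂) y)))
        (Prod.mk x ⁻¹' {p : ℝ × ℝ | p.1 ≤ p.2})
      = ENNReal.ofReal ((b₂ - max 0 x) / b₂) := by
    intro x
    have hpre : (Prod.mk x ⁻¹' {p : ℝ × ℝ | p.1 ≤ p.2}) = Set.Ici x := rfl
    rw [hpre, withDensity_apply _ measurableSet_Ici]
    have : ∀ y : ℝ,
        ENNReal.ofReal ((Set.Icc (0:ℝ) b₂).indicator (fun _ => 1 / b₂) y)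
        = (Set.Icc (0:ℝ) b₂).indicator (fun _ => ENNReal.ofReal (1 / b₂)) y := by
      intro y
      by_cases hy : y ∈ Set.Icc (0:ℝ) b₂ <;> simp [Set.indicator, hy]
    simp_rw [this]
    have hset : Set.Icc (0:ℝ) b₂ ∩ Set.Ici x = Set.Icc (max 0 x) b₂ := by
      ext y; simp only [Set.mem_inter_iff, Set.mem_Icc, Set.mem_Ici, max_le_iff]; tauto
    rw [lintegral_indicator measurableSet_Icc, setLIntegral_const,
      Measure.restrict_apply measurableSet_Icc, hset,
      Real.volume_Icc, ← ENNReal.ofReal_mul (by positivity : (0:ℝ) ≤ 1 / b₂)]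
    congr 1
    ring
  simp_rw [hinner]
  -- outer integral
  have hgmeas : Measurable fun x : ℝ => ENNReal.ofReal ((b₂ - max 0 x) / b₂) :=
    (Continuous.div_const (continuous_const.sub (continuous_const.max continuous_id)) b₂).measurable.ennreal_ofReal
  have hfmeas : Measurable fun x : ℝ =>
      ENNReal.ofReal ((Set.Icc (0:ℝ) b₁).indicator (fun _ => 1 / b₁) x) :=
    ((measurable_const.indicator measurableSet_Icc)).ennreal_ofReal
  rw [lintegral_withDensity_eq_lintegral_mul _ hfmeas hgmeas]
  have hsplit : ∀ x : ℝ,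
      (fun x => ENNReal.ofReal ((Set.Icc (0:ℝ) b₁).indicator (fun _ => 1 / b₁) x)) x
        * ENNReal.ofReal ((b₂ - max 0 x) / b₂)
      = (Set.Icc (0:ℝ) b₁).indicator
          (fun x => ENNReal.ofReal (max ((b₂ - max 0 x) / b₂ / b₁) 0)) x := by
    intro x
    by_cases hx : x ∈ Set.Icc (0:ℝ) b₁
    · simp only [Set.indicator_of_mem hx, ofReal_max_zero,
        ← ENNReal.ofReal_mul (by positivity : (0:ℝ) ≤ 1 / b₁)]
      congr 1; ring
    · simp [Set.indicator_of_notMem hx]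
  calc ∫⁻ x, (fun x => ENNReal.ofReal ((Set.Icc (0:ℝ) b₁).indicator (fun _ => 1 / b₁) x)) x
        * ENNReal.ofReal ((b₂ - max 0 x) / b₂) ∂volume
      = ∫⁻ x in Set.Icc (0:ℝ) b₁,
          ENNReal.ofReal (max ((b₂ - max 0 x) / b₂ / b₁) 0) ∂volume := by
        simp_rw [hsplit]; exact lintegral_indicator measurableSet_Icc _
    _ = ENNReal.ofReal (∫ x in Set.Icc (0:ℝ) b₁, max ((b₂ - max 0 x) / b₂ / b₁) 0) := by
        refine (ofReal_integral_eq_lintegral_ofReal ?_ ?_).symm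
        · exact ((((continuous_const.sub (continuous_const.max continuous_id)).div_const b₂).div_const b₁).max continuous_const).continuousOn.integrableOn_compact isCompact_Icc
        · exact Filter.Eventually.of_forall fun x => le_max_right _ _
    _ = ENNReal.ofReal (b₂ / (2 * b₁)) := by
        congr 1
        rw [MeasureTheory.integral_Icc_eq_integral_Ioc,
          ← intervalIntegral.integral_of_le hb₁.le]
        have hcont : Continuous fun x : ℝ => max ((b₂ - max 0 x) / b₂ / b₁) 0 :=
          (((continuous_const.sub (continuous_const.max continuous_id)).div_const b₂).div_const b₁).max continuous_const
        rw [← intervalIntegral.integral_add_adjacent_intervals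
          (a := 0) (b := b₂) (c := b₁)
          (hcont.intervalIntegrable _ _) (hcont.intervalIntegrable _ _)]
        have e1 : ∫ x in (0:ℝ)..b₂, max ((b₂ - max 0 x) / b₂ / b₁) 0
            = ∫ x in (0:ℝ)..b₂, (b₂ - x) * (b₂ * b₁)⁻¹ := by
          refine intervalIntegral.integral_congr fun x hx => ?_
          rw [Set.uIcc_of_le hb₂.le] at hx
          rw [max_eq_right hx.1,
            max_eq_left (div_nonneg (div_nonneg (sub_nonneg.mpr hx.2) hb₂.le) hb₁.le),
            div_div, div_eq_mul_inv]
        have e2 : ∫ x in b₂..b₁, max ((b₂ - max 0 x) / b₂ / b₁) 0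
            = ∫ x in b₂..b₁, (0:ℝ) := by
          refine intervalIntegral.integral_congr fun x hx => ?_
          rw [Set.uIcc_of_le hb] at hx
          rw [max_eq_right (hb₂.le.trans hx.1),
            max_eq_right (div_nonpos_of_nonpos_of_nonneg
              (div_nonpos_of_nonpos_of_nonneg (by linarith [hx.1]) hb₂.le) hb₁.le)]
        rw [e1, e2, intervalIntegral.integral_zero, add_zero,
          intervalIntegral.integral_mul_const,
          intervalIntegral.integral_sub (intervalIntegrable_const)
            (intervalIntegral.intervalIntegrable_id),
          intervalIntegral.integral_const, integral_id]
        field_simp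
        ring

/-- If h* ≤ min(ℏ₁,ℏ₂) and 0 < h ≤ h*, then P{X₁ ≤ X₂} = (1/2)·(h/h*)^(q₂-q₁). -/
theorem prob_dist_case2_small
    {Ω : Type*} [MeasurableSpace Ω] (P : Measure Ω) [IsProbabilityMeasure P]
    (L C₁ C₂ q₁ q₂ h : ℝ) (hL : 0 < L) (hC₁ : 0 < C₁) (hC₂ : 0 < C₂)
    (hq₁ : 0 < q₁) (hq : q₁ < q₂) (hh : 0 < h)
    (ℏ₁ ℏ₂ hstar β₁ β₂ : ℝ)
    (hℏ₁ : ℏ₁ = (L / C₁) ^ (1 / q₁)) (hℏ₂ : ℏ₂ = (L / C₂) ^ (1 / q₂))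
    (hstar_def : hstar = (C₁ / C₂) ^ (1 / (q₂ - q₁)))
    (hβ₁ : β₁ = min L (C₁ * h ^ q₁)) (hβ₂ : β₂ = min L (C₂ * h ^ q₂))
    (X₁ X₂ : Ω → ℝ) (hX₁ : Measurable X₁) (hX₂ : Measurable X₂)
    (hindep : IndepFun X₁ X₂ P)
    (hX₁unif : Measure.map X₁ P =
      volume.withDensity
        (fun x => ENNReal.ofReal ((Set.Icc (0:ℝ) β₁).indicator (fun _ => 1 / β₁) x)))
    (hX₂unif : Measure.map X₂ P =
      volume.withDensity
        (fun x => ENNReal.ofReal ((Set.Icc (0:ℝ) β₂).indicator (fun _ => 1 / β₂) x)))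
    (hcase : hstar ≤ min ℏ₁ ℏ₂) (hrange : h ≤ hstar) :
    P {ω | X₁ ω ≤ X₂ ω} = ENNReal.ofReal ((1/2) * (h / hstar) ^ (q₂ - q₁)) := by
  have hq₂ : 0 < q₂ := hq₁.trans hq
  have hdq : 0 < q₂ - q₁ := sub_pos.mpr hq
  have hstar_pos : 0 < hstar := hstar_def ▸ Real.rpow_pos_of_pos (div_pos hC₁ hC₂) _
  have hh1 : h ≤ ℏ₁ := hrange.trans (hcase.trans (min_le_left _ _))
  have hh2 : h ≤ ℏ₂ := hrange.trans (hcase.trans (min_le_right _ _))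
  have hpow1 : h ^ q₁ ≤ L / C₁ := by
    have := Real.rpow_le_rpow hh.le hh1 hq₁.le
    rwa [hℏ₁, ← Real.rpow_mul (by positivity), one_div_mul_cancel hq₁.ne',
      Real.rpow_one] at this
  have hpow2 : h ^ q₂ ≤ L / C₂ := by
    have := Real.rpow_le_rpow hh.le hh2 hq₂.le
    rwa [hℏ₂, ← Real.rpow_mul (by positivity), one_div_mul_cancel hq₂.ne',
      Real.rpow_one] at this
  have hb₁ : β₁ = C₁ * h ^ q₁ := by
    rw [hβ₁, min_eq_right]
    calc C₁ * h ^ q₁ ≤ C₁ * (L / C₁) := by nlinarith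
      _ = L := by field_simp
  have hb₂ : β₂ = C₂ * h ^ q₂ := by
    rw [hβ₂, min_eq_right]
    calc C₂ * h ^ q₂ ≤ C₂ * (L / C₂) := by nlinarith
      _ = L := by field_simp
  have hstar_pow : hstar ^ (q₂ - q₁) = C₁ / C₂ := by
    rw [hstar_def, ← Real.rpow_mul (by positivity), one_div_mul_cancel hdq.ne',
      Real.rpow_one]
  have hd_le : h ^ (q₂ - q₁) ≤ C₁ / C₂ := by
    rw [← hstar_pow]
    exact Real.rpow_le_rpow hh.le hrange hdq.le
  have hsum : h ^ q₂ = h ^ q₁ * h ^ (q₂ - q₁) := by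
    rw [← Real.rpow_add hh]; ring_nf
  have hq₁pos : (0:ℝ) < h ^ q₁ := Real.rpow_pos_of_pos hh _
  have hdpos : (0:ℝ) < h ^ (q₂ - q₁) := Real.rpow_pos_of_pos hh _
  have hble : β₂ ≤ β₁ := by
    rw [hb₁, hb₂, hsum]
    have h1 : h ^ q₁ * h ^ (q₂ - q₁) ≤ h ^ q₁ * (C₁ / C₂) :=
      mul_le_mul_of_nonneg_left hd_le hq₁pos.le
    have h2 : C₂ * (h ^ q₁ * h ^ (q₂ - q₁)) ≤ C₂ * (h ^ q₁ * (C₁ / C₂)) :=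
      mul_le_mul_of_nonneg_left h1 hC₂.le
    have h3 : C₂ * (h ^ q₁ * (C₁ / C₂)) = C₁ * h ^ q₁ := by
      field_simp
    linarith
  have hb₂pos : 0 < β₂ := by rw [hb₂]; positivity
  rw [uniform_prob_le P β₁ β₂ hb₂pos hble X₁ X₂ hX₁ hX₂ hindep hX₁unif hX₂unif]
  congr 1
  rw [hb₁, hb₂, Real.div_rpow hh.le hstar_pos.le, hstar_pow, hsum]
  field_simp
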